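/- Let G be a locally compact group, Ω₀ and Ω two open neighborhoods of the identity in G with compact closure. For a closed subgroup H of G with Haar measure m_H, define vol_Ω(H) = m_H(H ∩ Ω)⁻¹ (when positive and finite). Then there exist constants c₁, c₂ > 0, depending only on Ω₀ and Ω (not on H or m_H), such that c₁·vol_{Ω₀}(H) ≤ vol_Ω(H) ≤ c₂·vol_{Ω₀}(H) for every closed subgroup H with Haar measure m_H satisfying 0 < m_H(H ∩ Ω), m_H(H ∩ Ω₀) < ∞. -/

import Mathlib

open MeasureTheory
open scoped ENNReal Pointwise

/-- Covering lemma: given `B` open containing `1` and `A` with compact closure, there is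
`n ≥ 1`, depending only on `A` and `B`, such that for every closed subgroup `H` and every
left-`H`-invariant measure `m`, `m (H ∩ A) ≤ n * m (H ∩ B)`. -/
lemma aux_cover {G : Type*} [Group G] [TopologicalSpace G] [IsTopologicalGroup G]
    [MeasurableSpace G] [BorelSpace G]
    (A B : Set G) (hBopen : IsOpen B) (hBmem : (1 : G) ∈ B)
    (hAcpt : IsCompact (closure A)) :
    ∃ n : ℕ, 0 < n ∧ ∀ H : Subgroup G, IsClosed (H : Set G) →
      ∀ m : Measure G, (∀ h ∈ H, Measure.map (fun x => h * x) m = m) →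
        m ((H : Set G) ∩ A) ≤ (n : ℝ≥0∞) * m ((H : Set G) ∩ B) := by
  obtain ⟨V, hVopen, hVmem, hVmul⟩ := exists_open_nhds_one_mul_subset (hBopen.mem_nhds hBmem)
  set O : Set G := V ∩ V⁻¹ with hO
  have hOopen : IsOpen O := hVopen.inter hVopen.inv
  have hOmem : (1 : G) ∈ O := ⟨hVmem, by simpa using hVmem⟩
  have hOsub : ∀ x ∈ O, ∀ y ∈ O, x⁻¹ * y ∈ B := by
    intro x hx y hy
    exact hVmul (Set.mul_mem_mul hx.2 hy.1)
  -- finite subcover of `closure A` by translates of `O`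
  have hcov : closure A ⊆ ⋃ g : G, g • O := by
    intro x _
    exact Set.mem_iUnion.2 ⟨x, ⟨1, hOmem, by simp⟩⟩
  obtain ⟨t, ht⟩ := hAcpt.elim_finite_subcover (fun g : G => g • O)
    (fun g => hOopen.smul g) hcov
  refine ⟨t.card + 1, Nat.succ_pos _, ?_⟩
  intro H hHcl m hinv
  have hmono : (H : Set G) ∩ A ⊆ ⋃ g ∈ t, (H : Set G) ∩ g • O := by
    intro x hx
    obtain ⟨g, hg, hxg⟩ := Set.mem_iUnion₂.1 (ht (subset_closure hx.2))
    exact Set.mem_iUnion₂.2 ⟨g, hg, hx.1, hxg⟩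
  have key : ∀ g : G, m ((H : Set G) ∩ g • O) ≤ m ((H : Set G) ∩ B) := by
    intro g
    rcases Set.eq_empty_or_nonempty ((H : Set G) ∩ g • O) with he | ⟨h, hhH, hhO⟩
    · simp [he]
    · -- translate back by `h⁻¹`
      obtain ⟨o₂, ho₂, rfl⟩ := hhO
      have hhH' : g * o₂ ∈ H := by simpa [smul_eq_mul] using hhH
      set S : Set G := (H : Set G) ∩ g • O with hS
      have hSmeas : MeasurableSet S :=
        hHcl.measurableSet.inter (hOopen.smul g).measurableSet
      have hTdef : (fun x => (g * o₂) * x) ⁻¹' S = ((g * o₂)⁻¹) • S := by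
        ext x
        simp [Set.mem_smul_set_iff_inv_smul_mem, smul_eq_mul]
      have hmap := hinv (g * o₂) hhH'
      have hmS : m S = m (((g * o₂)⁻¹) • S) := by
        conv_lhs => rw [← hmap]
        rw [Measure.map_apply (measurable_const_mul _) hSmeas, hTdef]
      have hsub : ((g * o₂)⁻¹) • S ⊆ (H : Set G) ∩ B := by
        rintro _ ⟨y, ⟨hyH, o₁, ho₁, rfl⟩, rfl⟩
        simp only [smul_eq_mul]
        constructor
        · exact H.mul_mem (H.inv_mem hhH') (by simpa [smul_eq_mul] using hyH)
        · have heq : (g * o₂)⁻¹ * (g * o₁) = o₂⁻¹ * o₁ := by group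
          rw [heq]
          exact hOsub o₂ ho₂ o₁ ho₁
      calc m S = m (((g * o₂)⁻¹) • S) := hmS
        _ ≤ m ((H : Set G) ∩ B) := measure_mono hsub
  calc m ((H : Set G) ∩ A) ≤ m (⋃ g ∈ t, (H : Set G) ∩ g • O) := measure_mono hmono
    _ ≤ ∑ g ∈ t, m ((H : Set G) ∩ g • O) := measure_biUnion_finset_le t _
    _ ≤ t.card • m ((H : Set G) ∩ B) := Finset.sum_le_card_nsmul t _ _ (fun g _ => key g)
    _ = (t.card : ℝ≥0∞) * m ((H : Set G) ∩ B) := by rw [nsmul_eq_mul]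
    _ ≤ ((t.card + 1 : ℕ) : ℝ≥0∞) * m ((H : Set G) ∩ B) := by
        gcongr
        exact_mod_cast Nat.le_succ _

/-- Comparability of the volume normalizations `vol_Om` and `vol_{Om0}` of closed subgroups
with Haar measure, uniformly over the subgroup. -/
theorem stmt0 {G : Type*} [Group G] [TopologicalSpace G] [IsTopologicalGroup G]
    [LocallyCompactSpace G] [MeasurableSpace G] [BorelSpace G]
    (Om0 Om : Set G) (h₀open : IsOpen Om0) (hopen : IsOpen Om)
    (h₀mem : (1 : G) ∈ Om0) (hmem : (1 : G) ∈ Om)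
    (h₀cpt : IsCompact (closure Om0)) (hcpt : IsCompact (closure Om)) :
    ∃ c₁ c₂ : ℝ≥0∞, 0 < c₁ ∧ c₁ < ⊤ ∧ 0 < c₂ ∧ c₂ < ⊤ ∧
      ∀ H : Subgroup G, IsClosed (H : Set G) →
        ∀ m : Measure G, m ((H : Set G)ᶜ) = 0 →
          (∀ h ∈ H, Measure.map (fun x => h * x) m = m) →
          0 < m ((H : Set G) ∩ Om) → m ((H : Set G) ∩ Om) < ⊤ →
          0 < m ((H : Set G) ∩ Om0) → m ((H : Set G) ∩ Om0) < ⊤ →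
          c₁ * (m ((H : Set G) ∩ Om0))⁻¹ ≤ (m ((H : Set G) ∩ Om))⁻¹ ∧
          (m ((H : Set G) ∩ Om))⁻¹ ≤ c₂ * (m ((H : Set G) ∩ Om0))⁻¹ := by
  obtain ⟨n₁, hn₁, h₁⟩ := aux_cover Om0 Om hopen hmem h₀cpt
  obtain ⟨n₂, hn₂, h₂⟩ := aux_cover Om Om0 h₀open h₀mem hcpt
  have hn₁0 : (n₁ : ℝ≥0∞) ≠ 0 := by exact_mod_cast hn₁.ne'
  have hn₁t : (n₁ : ℝ≥0∞) ≠ ⊤ := ENNReal.natCast_ne_top _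
  have hn₂0 : (n₂ : ℝ≥0∞) ≠ 0 := by exact_mod_cast hn₂.ne'
  have hn₂t : (n₂ : ℝ≥0∞) ≠ ⊤ := ENNReal.natCast_ne_top _
  refine ⟨(n₂ : ℝ≥0∞)⁻¹, (n₁ : ℝ≥0∞), ?_, ?_, ?_, ?_, ?_⟩
  · simp [pos_iff_ne_zero, hn₂t]
  · simp [lt_top_iff_ne_top, hn₂0]
  · exact pos_iff_ne_zero.2 hn₁0
  · exact hn₁t.lt_top
  intro H hHcl m hnull hinv hΩpos hΩfin h₀pos h₀fin
  set mΩ := m ((H : Set G) ∩ Om) with hmΩ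
  set m0 := m ((H : Set G) ∩ Om0) with hm0
  have H1 : m0 ≤ (n₁ : ℝ≥0∞) * mΩ := h₁ H hHcl m hinv
  have H2 : mΩ ≤ (n₂ : ℝ≥0∞) * m0 := h₂ H hHcl m hinv
  constructor
  · have e1 : (n₂ : ℝ≥0∞)⁻¹ * m0⁻¹ = ((n₂ : ℝ≥0∞) * m0)⁻¹ :=
      (ENNReal.mul_inv (Or.inl hn₂0) (Or.inl hn₂t)).symm
    rw [e1]
    exact ENNReal.inv_le_inv.2 H2
  · have e2 : (n₁ : ℝ≥0∞) * ((n₁ : ℝ≥0∞) * mΩ)⁻¹ = mΩ⁻¹ := by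
      rw [ENNReal.mul_inv (Or.inl hn₁0) (Or.inl hn₁t), ← mul_assoc,
        ENNReal.mul_inv_cancel hn₁0 hn₁t, one_mul]
    rw [← e2]
    exact mul_le_mul_right (ENNReal.inv_le_inv.2 H1) _
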